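/- Let 𝒜 ⊆ ℕ be a sequence with increasing enumeration a₀ < a₁ < ⋯. The following are equivalent: (i) A is O-regularly varying (A(λx) ≍ A(x) for every λ > 0) and has positive increase (x^{−γ}A(x) is almost increasing for some γ > 0); (ii) ∫_{1}^{x} A(t)/t dt = Θ(A(x)) as x → ∞; (iii) both A(2x) = O(A(x)) and a_{2n} = O(a_n); (iv) ∫_{1}^{x} s_{𝒜,h}(t)/t dt = Θ(s_{𝒜,h}(x)) for some h ≥ 1 (equivalently, for every h ≥ 1). -/

import Mathlib

open Filter Asymptotics MeasureTheory

/-- Counting function `A(x) = |𝒜 ∩ [0,x]|`. -/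
noncomputable def cntA (A : Set ℕ) (x : ℝ) : ℕ :=
  {n : ℕ | n ∈ A ∧ (n : ℝ) ≤ x}.ncard

/-- The increasing enumeration `a₀ < a₁ < ⋯` of a set `A ⊆ ℕ`. -/
noncomputable def seqA (A : Set ℕ) (n : ℕ) : ℕ := Nat.nth (· ∈ A) n

/-- `A` is an OR sequence: `A(2x) = O(A(x))`. -/
def ORseq (A : Set ℕ) : Prop :=
  (fun x : ℝ => (cntA A (2 * x) : ℝ)) =O[atTop] (fun x : ℝ => (cntA A x : ℝ))

/-- `A` is a PI sequence: `a_{2n} = O(a_n)`. -/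
def PIseq (A : Set ℕ) : Prop :=
  (fun n : ℕ => (seqA A (2 * n) : ℝ)) =O[atTop] (fun n : ℕ => (seqA A n : ℝ))

/-- `A` is an OR₊ sequence: an infinite subset of ℕ that is both OR and PI. -/
def ORplus (A : Set ℕ) : Prop := A.Infinite ∧ ORseq A ∧ PIseq A

/-- `sA A h x` is the number of ordered `h`-tuples of elements of `A` with sum at most `x`. -/
noncomputable def sA (A : Set ℕ) (h : ℕ) (x : ℝ) : ℕ :=
  {t : Fin h → ℕ | (∀ i, t i ∈ A) ∧ ((∑ i, t i : ℕ) : ℝ) ≤ x}.ncard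

/-- `f` is almost increasing (on some tail `[x₀, ∞)`): there is `m > 0` with
`f(y) ≥ m·f(x)` for all `y ≥ x ≥ x₀`. -/
def AlmostIncreasing (f : ℝ → ℝ) : Prop :=
  ∃ m : ℝ, 0 < m ∧ ∃ x₀ : ℝ, ∀ x y : ℝ, x₀ ≤ x → x ≤ y → m * f x ≤ f y

/-- `f` has positive increase: `x^{-γ} f(x)` is almost increasing for some `γ > 0`. -/
def PositiveIncrease (f : ℝ → ℝ) : Prop :=
  ∃ γ : ℝ, 0 < γ ∧ AlmostIncreasing (fun x : ℝ => x ^ (-γ) * f x)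

section cnt
variable (A : Set ℕ)

open Classical in
lemma cntA_eq_count (x : ℝ) (hx : 0 ≤ x) :
    cntA A x = Nat.count (· ∈ A) (⌊x⌋₊ + 1) := by
  rw [cntA, Nat.count_eq_card_filter_range, ← Set.ncard_coe_finset]
  congr 1
  ext n
  simp only [Set.mem_setOf_eq, Finset.coe_filter, Finset.mem_range, Nat.lt_succ_iff,
    Nat.le_floor_iff hx]
  tauto

lemma cntA_set_finite (x : ℝ) : {n : ℕ | n ∈ A ∧ (n : ℝ) ≤ x}.Finite := by
  apply Set.Finite.subset (Set.finite_Iic ⌊x⌋₊)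
  rintro n ⟨-, hn⟩
  exact Nat.le_floor hn

lemma cntA_mono : Monotone (fun x => (cntA A x : ℝ)) := by
  intro x y hxy
  exact Nat.cast_le.2 <|
    Set.ncard_le_ncard (fun n ⟨h1, h2⟩ => ⟨h1, h2.trans hxy⟩) (cntA_set_finite A y)

lemma cntA_nonneg : ∀ x : ℝ, 0 ≤ (cntA A x : ℝ) := fun _ => Nat.cast_nonneg _

variable {A}

open Classical in
lemma cntA_nth (hA : A.Infinite) (n : ℕ) : cntA A ((Nat.nth (· ∈ A) n : ℕ) : ℝ) = n + 1 := by
  rw [cntA_eq_count A _ (Nat.cast_nonneg _), Nat.floor_natCast]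
  exact Nat.count_nth_succ_of_infinite (p := (· ∈ A)) hA n

open Classical in
lemma nth_le_of_lt_cntA (hA : A.Infinite) {k : ℕ} {y : ℝ} (h : k < cntA A y) :
    ((Nat.nth (· ∈ A) k : ℕ) : ℝ) ≤ y := by
  have hy : 0 ≤ y := by
    by_contra hy
    push_neg at hy
    have : {n : ℕ | n ∈ A ∧ (n : ℝ) ≤ y} = ∅ := by
      ext n; simp only [Set.mem_setOf_eq, Set.mem_empty_iff_false, iff_false]
      rintro ⟨-, hn⟩
      exact (not_lt.2 (Nat.cast_nonneg n)) (hn.trans_lt hy)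
    simp [cntA, this] at h
  rw [cntA_eq_count A y hy] at h
  have := (Nat.lt_nth_iff_count_lt (p := (· ∈ A)) hA).1 h
  calc ((Nat.nth (· ∈ A) k : ℕ) : ℝ) ≤ (⌊y⌋₊ : ℝ) := by exact_mod_cast Nat.lt_succ_iff.1 this
    _ ≤ y := Nat.floor_le hy

open Classical in
lemma lt_cntA_of_nth_le (hA : A.Infinite) {k : ℕ} {y : ℝ} (h : ((Nat.nth (· ∈ A) k : ℕ) : ℝ) ≤ y) :
    k < cntA A y := by
  have hy : 0 ≤ y := le_trans (Nat.cast_nonneg _) h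
  rw [cntA_eq_count A y hy]
  exact (Nat.lt_nth_iff_count_lt (p := (· ∈ A)) hA).2 (Nat.lt_succ_iff.2 (Nat.le_floor h))

lemma eventually_cntA_ge (hA : A.Infinite) (c : ℕ) : ∀ᶠ x : ℝ in atTop, c ≤ cntA A x := by
  filter_upwards [eventually_ge_atTop ((Nat.nth (· ∈ A) c : ℕ) : ℝ)] with x hx
  exact (lt_cntA_of_nth_le hA hx).le

end cnt

def DoubF (f : ℝ → ℝ) : Prop := ∃ K : ℝ, 1 ≤ K ∧ ∀ᶠ x : ℝ in atTop, f (2 * x) ≤ K * f x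
def GrowF (f : ℝ → ℝ) : Prop := ∃ L : ℝ, 1 < L ∧ ∀ᶠ x : ℝ in atTop, 2 * f x ≤ f (L * x)

variable {f : ℝ → ℝ}

lemma ev_mul {c : ℝ} (hc : 0 < c) {P : ℝ → Prop} (h : ∀ᶠ x : ℝ in atTop, P x) :
    ∀ᶠ x : ℝ in atTop, P (c * x) :=
  (Tendsto.const_mul_atTop hc tendsto_id).eventually h

lemma doubF_pow (hf0 : ∀ x, 0 ≤ f x) (h : DoubF f) (j : ℕ) :
    ∃ K : ℝ, 1 ≤ K ∧ ∀ᶠ x : ℝ in atTop, f (2 ^ j * x) ≤ K * f x := by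
  obtain ⟨K, hK1, hK⟩ := h
  induction j with
  | zero => exact ⟨1, le_refl _, by simpa using Eventually.of_forall (fun x => le_refl _)⟩
  | succ j ih =>
    obtain ⟨K', hK'1, hK'⟩ := ih
    refine ⟨K * K', one_le_mul_of_one_le_of_one_le hK1 hK'1, ?_⟩
    filter_upwards [hK', ev_mul (by positivity : (0:ℝ) < 2 ^ j) hK] with x h1 h2
    calc f (2 ^ (j + 1) * x) = f (2 * (2 ^ j * x)) := by ring_nf
      _ ≤ K * f (2 ^ j * x) := h2
      _ ≤ K * (K' * f x) := by
          exact mul_le_mul_of_nonneg_left h1 (by linarith)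
      _ = K * K' * f x := by ring

lemma doubF_mul (hm : Monotone f) (hf0 : ∀ x, 0 ≤ f x) (h : DoubF f) (c : ℝ) :
    ∃ K : ℝ, 1 ≤ K ∧ ∀ᶠ x : ℝ in atTop, f (c * x) ≤ K * f x := by
  obtain ⟨j, hj⟩ := pow_unbounded_of_one_lt c (one_lt_two : (1:ℝ) < 2)
  obtain ⟨K, hK1, hK⟩ := doubF_pow hf0 h j
  refine ⟨K, hK1, ?_⟩
  filter_upwards [hK, eventually_ge_atTop (0:ℝ)] with x h1 hx0
  exact le_trans (hm (by nlinarith)) h1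

lemma growF_pointwise (h : GrowF f) :
    ∃ L : ℝ, 1 < L ∧ ∃ x₀ : ℝ, 1 ≤ x₀ ∧ ∀ x, x₀ ≤ x → ∀ k : ℕ, 2 ^ k * f x ≤ f (L ^ k * x) := by
  obtain ⟨L, hL1, hL⟩ := h
  obtain ⟨y₀, hy₀⟩ := eventually_atTop.1 hL
  refine ⟨L, hL1, max y₀ 1, le_max_right _ _, fun x hx => ?_⟩
  have hx1 : 1 ≤ x := le_trans (le_max_right _ _) hx
  intro k
  induction k with
  | zero => simp
  | succ k ih =>
    have hLk : (1:ℝ) ≤ L ^ k := one_le_pow₀ hL1.le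
    have h2 : 2 * f (L ^ k * x) ≤ f (L * (L ^ k * x)) := by
      apply hy₀
      calc y₀ ≤ max y₀ 1 := le_max_left _ _
        _ ≤ x := hx
        _ ≤ L ^ k * x := le_mul_of_one_le_left (by linarith) hLk
    calc 2 ^ (k+1) * f x = 2 * (2 ^ k * f x) := by ring
      _ ≤ 2 * f (L ^ k * x) := by linarith
      _ ≤ f (L * (L ^ k * x)) := h2
      _ = f (L ^ (k+1) * x) := by ring_nf

lemma growF_ratio (hm : Monotone f) (hf0 : ∀ x, 0 ≤ f x) (h : GrowF f) :
    ∃ γ : ℝ, 0 < γ ∧ ∃ x₀ : ℝ, 1 ≤ x₀ ∧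
      ∀ t x : ℝ, x₀ ≤ t → t ≤ x → (x / t) ^ γ * f t ≤ 2 * f x := by
  obtain ⟨L, hL1, x₀, hx₀, hpt⟩ := growF_pointwise h
  have hL0 : (0:ℝ) < L := lt_trans one_pos hL1
  refine ⟨Real.logb L 2, Real.logb_pos hL1 one_lt_two, x₀, hx₀, fun t x ht htx => ?_⟩
  have hL0 : (0:ℝ) < L := lt_trans one_pos hL1
  have ht0 : (0:ℝ) < t := lt_of_lt_of_le one_pos (hx₀.trans ht)
  set γ := Real.logb L 2 with hγdef
  have hu1 : (1:ℝ) ≤ x / t := (one_le_div ht0).2 htx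
  have hu0 : (0:ℝ) < x / t := lt_of_lt_of_le one_pos hu1
  set k := ⌊Real.logb L (x/t)⌋₊ with hk
  have hlog0 : 0 ≤ Real.logb L (x/t) := Real.logb_nonneg hL1 hu1
  have h1 : (L:ℝ) ^ k ≤ x / t := by
    calc (L:ℝ) ^ k = L ^ (k:ℝ) := (Real.rpow_natCast L k).symm
      _ ≤ L ^ Real.logb L (x/t) :=
          (Real.rpow_le_rpow_left_iff hL1).2 (Nat.floor_le hlog0)
      _ = x / t := Real.rpow_logb hL0 hL1.ne' hu0
  have hswap : ∀ a b : ℝ, (L ^ a) ^ b = (L ^ b) ^ a := fun a b => by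
    rw [← Real.rpow_mul hL0.le, ← Real.rpow_mul hL0.le, mul_comm]
  have key : (x/t) ^ γ = (2:ℝ) ^ Real.logb L (x/t) := by
    calc (x/t)^γ = (L ^ Real.logb L (x/t)) ^ γ := by rw [Real.rpow_logb hL0 hL1.ne' hu0]
      _ = (L ^ γ) ^ Real.logb L (x/t) := hswap _ _
      _ = (2:ℝ) ^ Real.logb L (x/t) := by rw [hγdef, Real.rpow_logb hL0 hL1.ne' two_pos]
  have h2 : (x/t) ^ γ ≤ 2 * 2 ^ k := by
    rw [key]
    calc (2:ℝ) ^ Real.logb L (x/t) ≤ 2 ^ ((k:ℝ)+1) :=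
          (Real.rpow_le_rpow_left_iff one_lt_two).2 (Nat.lt_floor_add_one _).le
      _ = 2 * 2 ^ k := by
          rw [Real.rpow_add two_pos, Real.rpow_one, Real.rpow_natCast]; ring
  have h3 : 2 ^ k * f t ≤ f (L ^ k * t) := hpt t ht k
  have h4 : f (L ^ k * t) ≤ f x := by
    apply hm
    calc L ^ k * t ≤ (x/t) * t := mul_le_mul_of_nonneg_right h1 ht0.le
      _ = x := div_mul_cancel₀ x ht0.ne'
  have h5 : (x/t) ^ γ * f t ≤ (2 * 2 ^ k) * f t := mul_le_mul_of_nonneg_right h2 (hf0 t)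
  have h6 : (2 * 2 ^ k) * f t = 2 * (2 ^ k * f t) := by ring
  linarith


lemma growF_posInc (hm : Monotone f) (hf0 : ∀ x, 0 ≤ f x) (h : GrowF f) :
    PositiveIncrease f := by
  obtain ⟨γ, hγ, x₀, hx₀, hr⟩ := growF_ratio hm hf0 h
  refine ⟨γ, hγ, 1/2, one_half_pos, x₀, fun x y hx hxy => ?_⟩
  have hx0 : (0:ℝ) < x := lt_of_lt_of_le one_pos (hx₀.trans hx)
  have hy0 : (0:ℝ) < y := lt_of_lt_of_le hx0 hxy
  have := hr x y hx hxy
  -- (y/x)^γ * f x ≤ 2 * f y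
  have hxyγ : (y/x) ^ γ = y ^ γ * (x ^ γ)⁻¹ := by
    rw [Real.div_rpow hy0.le hx0.le, div_eq_mul_inv]
  have hyn : y ^ (-γ) = (y ^ γ)⁻¹ := Real.rpow_neg hy0.le γ
  have hxn : x ^ (-γ) = (x ^ γ)⁻¹ := Real.rpow_neg hx0.le γ
  have hxγ : (0:ℝ) < x ^ γ := Real.rpow_pos_of_pos hx0 γ
  have hyγ : (0:ℝ) < y ^ γ := Real.rpow_pos_of_pos hy0 γ
  simp only []
  rw [hyn, hxn]
  rw [hxyγ] at this
  have h7 := mul_le_mul_of_nonneg_left this (inv_pos.2 hyγ).le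
  have e : (y^γ)⁻¹ * (y ^ γ * (x ^ γ)⁻¹ * f x) = (x^γ)⁻¹ * f x := by field_simp
  rw [e] at h7
  have e2 : (y^γ)⁻¹ * (2 * f y) = 2 * ((y^γ)⁻¹ * f y) := by ring
  rw [e2] at h7
  linarith

lemma posInc_growF (hf0 : ∀ x, 0 ≤ f x) (h : PositiveIncrease f) : GrowF f := by
  obtain ⟨γ, hγ, m, hm0, x₀, hai⟩ := h
  set L : ℝ := max 2 ((2/m) ^ (1/γ)) with hL
  have hL2 : (2:ℝ) ≤ L := le_max_left _ _
  have hL1 : (1:ℝ) < L := lt_of_lt_of_le one_lt_two hL2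
  have hL0 : (0:ℝ) < L := lt_trans one_pos hL1
  refine ⟨L, hL1, ?_⟩
  filter_upwards [eventually_ge_atTop (max x₀ 1)] with x hx
  have hx1 : (1:ℝ) ≤ x := le_trans (le_max_right _ _) hx
  have hx0 : (0:ℝ) < x := lt_of_lt_of_le one_pos hx1
  have hxx₀ : x₀ ≤ x := le_trans (le_max_left _ _) hx
  have key := hai x (L * x) hxx₀ (le_mul_of_one_le_left hx0.le hL1.le)
  simp only [] at key
  -- m * (x^(-γ) * f x) ≤ (L*x)^(-γ) * f (L*x)
  have h2m : 2 / m ≤ L ^ γ := by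
    have h1 : ((2/m) ^ (1/γ)) ^ γ = 2/m := by
      rw [← Real.rpow_mul (by positivity), one_div, inv_mul_cancel₀ hγ.ne', Real.rpow_one]
    calc 2/m = ((2/m) ^ (1/γ)) ^ γ := h1.symm
      _ ≤ L ^ γ := Real.rpow_le_rpow (by positivity) (le_max_right _ _) hγ.le
  have hLxγ : (L * x) ^ (-γ) = L ^ (-γ) * x ^ (-γ) := Real.mul_rpow hL0.le hx0.le
  rw [hLxγ] at key
  have hLγ : (0:ℝ) < L ^ γ := Real.rpow_pos_of_pos hL0 γ
  have hxγ : (0:ℝ) < x ^ γ := Real.rpow_pos_of_pos hx0 γ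
  have hLn : L ^ (-γ) = (L ^ γ)⁻¹ := Real.rpow_neg hL0.le γ
  have hxn : x ^ (-γ) = (x ^ γ)⁻¹ := Real.rpow_neg hx0.le γ
  rw [hLn, hxn] at key
  -- m * ((x^γ)⁻¹ * f x) ≤ (L^γ)⁻¹ * (x^γ)⁻¹ * f (L*x)
  have hmL : 2 ≤ m * L ^ γ := by
    rw [div_le_iff₀ hm0] at h2m; linarith [mul_comm m (L^γ)]
  have := mul_le_mul_of_nonneg_left key (mul_pos hLγ hxγ).le
  -- expand
  have e1 : (L^γ * x^γ) * (m * ((x^γ)⁻¹ * f x)) = m * L^γ * f x := by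
    field_simp
  have e2 : (L^γ * x^γ) * ((L^γ)⁻¹ * (x^γ)⁻¹ * f (L*x)) = f (L*x) := by
    field_simp
  rw [e1, e2] at this
  nlinarith [hf0 x]

lemma doubF_theta (hm : Monotone f) (hf0 : ∀ x, 0 ≤ f x) (h : DoubF f) {lam : ℝ}
    (hlam : 0 < lam) : (fun x => f (lam * x)) =Θ[atTop] f := by
  obtain ⟨K, hK1, hK⟩ := doubF_mul hm hf0 h lam
  obtain ⟨K', hK'1, hK'⟩ := doubF_mul hm hf0 h (1/lam)
  constructor
  · apply IsBigO.of_bound K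
    filter_upwards [hK] with x hx
    rwa [Real.norm_of_nonneg (hf0 _), Real.norm_of_nonneg (hf0 _)]
  · apply IsBigO.of_bound K'
    filter_upwards [ev_mul hlam hK'] with x hx
    rw [Real.norm_of_nonneg (hf0 _), Real.norm_of_nonneg (hf0 _)]
    have e : (1/lam) * (lam * x) = x := by field_simp
    rwa [e] at hx

lemma theta_doubF (hf0 : ∀ x, 0 ≤ f x)
    (h : (fun x => f (2 * x)) =Θ[atTop] f) : DoubF f := by
  obtain ⟨c, hc, hb⟩ := h.1.exists_pos
  refine ⟨max c 1, le_max_right _ _, ?_⟩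
  filter_upwards [hb.bound] with x hx
  rw [Real.norm_of_nonneg (hf0 _), Real.norm_of_nonneg (hf0 _)] at hx
  exact hx.trans (mul_le_mul_of_nonneg_right (le_max_left _ _) (hf0 _))

section Integral

noncomputable def intF (f : ℝ → ℝ) (x : ℝ) : ℝ := ∫ t in Set.Icc 1 x, f t / t

lemma integ_div (hm : Monotone f) (hf0 : ∀ x, 0 ≤ f x) {a b : ℝ} (ha : 1 ≤ a) (hab : a ≤ b) :
    IntervalIntegrable (fun t => f t / t) volume a b := by
  rw [intervalIntegrable_iff_integrableOn_Ioc_of_le hab]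
  apply Measure.integrableOn_of_bounded (M := f b) measure_Ioc_lt_top.ne
    ((hm.measurable.div measurable_id).aestronglyMeasurable)
  apply ae_restrict_of_forall_mem measurableSet_Ioc
  intro t ht
  have ht1 : (1:ℝ) ≤ t := ha.trans ht.1.le
  simp only [Pi.div_apply, id_eq]
  rw [Real.norm_of_nonneg (div_nonneg (hf0 t) (by linarith))]
  calc f t / t ≤ f t := div_le_self (hf0 t) ht1
    _ ≤ f b := hm ht.2

lemma intF_eq (hx : (1:ℝ) ≤ x) : intF f x = ∫ t in (1:ℝ)..x, f t / t := by
  rw [intervalIntegral.integral_of_le hx, intF, integral_Icc_eq_integral_Ioc]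

lemma int_upper (hm : Monotone f) (hf0 : ∀ x, 0 ≤ f x) {a b : ℝ} (ha : 1 ≤ a) (hab : a ≤ b) :
    ∫ t in a..b, f t / t ≤ f b * Real.log (b / a) := by
  have ha0 : (0:ℝ) < a := lt_of_lt_of_le one_pos ha
  have h0 : (0:ℝ) ∉ Set.uIcc a b := by
    rw [Set.uIcc_of_le hab]
    rintro ⟨h1, -⟩; linarith
  have hcont : ContinuousOn (fun t : ℝ => f b * (1 / t)) (Set.uIcc a b) := by
    apply ContinuousOn.mul continuousOn_const
    apply ContinuousOn.div continuousOn_const continuousOn_id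
    intro t ht
    rw [Set.uIcc_of_le hab] at ht h0
    intro h; exact h0 (h ▸ ht)
  calc ∫ t in a..b, f t / t ≤ ∫ t in a..b, f b * (1 / t) := by
        apply intervalIntegral.integral_mono_on hab (integ_div hm hf0 ha hab)
          hcont.intervalIntegrable
        intro t ht
        have ht0 : (0:ℝ) < t := lt_of_lt_of_le ha0 ht.1
        rw [div_eq_mul_inv, mul_one_div, div_eq_mul_inv]
        exact mul_le_mul_of_nonneg_right (hm ht.2) (inv_nonneg.2 ht0.le)
    _ = f b * Real.log (b / a) := by
        rw [intervalIntegral.integral_const_mul, integral_one_div h0]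

lemma int_lower (hm : Monotone f) (hf0 : ∀ x, 0 ≤ f x) {a b : ℝ} (ha : 1 ≤ a) (hab : a ≤ b) :
    f a * Real.log (b / a) ≤ ∫ t in a..b, f t / t := by
  have ha0 : (0:ℝ) < a := lt_of_lt_of_le one_pos ha
  have h0 : (0:ℝ) ∉ Set.uIcc a b := by
    rw [Set.uIcc_of_le hab]
    rintro ⟨h1, -⟩; linarith
  have hcont : ContinuousOn (fun t : ℝ => f a * (1 / t)) (Set.uIcc a b) := by
    apply ContinuousOn.mul continuousOn_const
    apply ContinuousOn.div continuousOn_const continuousOn_id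
    intro t ht
    rw [Set.uIcc_of_le hab] at ht h0
    intro h; exact h0 (h ▸ ht)
  calc f a * Real.log (b / a) = ∫ t in a..b, f a * (1 / t) := by
        rw [intervalIntegral.integral_const_mul, integral_one_div h0]
    _ ≤ ∫ t in a..b, f t / t := by
        apply intervalIntegral.integral_mono_on hab hcont.intervalIntegrable
          (integ_div hm hf0 ha hab)
        intro t ht
        have ht0 : (0:ℝ) < t := lt_of_lt_of_le ha0 ht.1
        rw [mul_one_div, div_le_div_iff_of_pos_right ht0]
        exact hm ht.1

lemma int_nonneg' (hf0 : ∀ x, 0 ≤ f x) {a b : ℝ} (ha : 0 < a) (hab : a ≤ b) :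
    0 ≤ ∫ t in a..b, f t / t := by
  apply intervalIntegral.integral_nonneg hab
  intro t ht
  exact div_nonneg (hf0 t) (le_trans ha.le ht.1)

lemma intF_split (hm : Monotone f) (hf0 : ∀ x, 0 ≤ f x) {a b : ℝ} (ha : 1 ≤ a) (hab : a ≤ b) :
    intF f b = intF f a + ∫ t in a..b, f t / t := by
  rw [intF_eq ha, intF_eq (ha.trans hab)]
  exact (intervalIntegral.integral_add_adjacent_intervals (integ_div hm hf0 le_rfl ha)
    (integ_div hm hf0 ha hab)).symm

lemma intF_mono (hm : Monotone f) (hf0 : ∀ x, 0 ≤ f x) {a b : ℝ} (ha : 1 ≤ a) (hab : a ≤ b) :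
    intF f a ≤ intF f b := by
  rw [intF_split hm hf0 ha hab]
  linarith [int_nonneg' hf0 (lt_of_lt_of_le one_pos ha) hab]

lemma intF_nonneg (hf0 : ∀ x, 0 ≤ f x) (x : ℝ) : 0 ≤ intF f x := by
  apply setIntegral_nonneg measurableSet_Icc
  intro t ht
  exact div_nonneg (hf0 t) (le_trans zero_le_one ht.1)

end Integral

theorem dg_theta_int (hm : Monotone f) (hf0 : ∀ x, 0 ≤ f x) (hd : DoubF f) (hg : GrowF f) :
    (fun x => intF f x) =Θ[atTop] f := by
  constructor
  · -- intF f =O f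
    obtain ⟨γ, hγ, x₀, hx₀, hr⟩ := growF_ratio hm hf0 hg
    have hx₀0 : (0:ℝ) < x₀ := lt_of_lt_of_le one_pos hx₀
    apply IsBigO.of_bound (Real.log x₀ + 2 / γ)
    filter_upwards [eventually_ge_atTop x₀] with x hx
    have hx1 : (1:ℝ) ≤ x := hx₀.trans hx
    have hx0 : (0:ℝ) < x := lt_of_lt_of_le one_pos hx1
    have hxγ : (0:ℝ) < x ^ γ := Real.rpow_pos_of_pos hx0 γ
    rw [Real.norm_of_nonneg (intF_nonneg hf0 x), Real.norm_of_nonneg (hf0 x)]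
    have hsplit := intF_split hm hf0 hx₀ hx
    -- bound the first piece
    have hp1 : intF f x₀ ≤ Real.log x₀ * f x := by
      have := int_upper hm hf0 (le_refl (1:ℝ)) hx₀
      rw [← intF_eq hx₀, div_one] at this
      calc intF f x₀ ≤ f x₀ * Real.log x₀ := this
        _ ≤ f x * Real.log x₀ :=
            mul_le_mul_of_nonneg_right (hm hx) (Real.log_nonneg hx₀)
        _ = Real.log x₀ * f x := mul_comm _ _
    -- bound the second piece
    have hcont : ContinuousOn (fun t : ℝ => 2 * f x * (x ^ γ)⁻¹ * t ^ (γ - 1))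
        (Set.uIcc x₀ x) := by
      apply ContinuousOn.mul continuousOn_const
      apply ContinuousOn.rpow_const continuousOn_id
      intro t ht
      rw [Set.uIcc_of_le hx] at ht
      exact Or.inl (by simp only [id_eq]; exact ne_of_gt (lt_of_lt_of_le hx₀0 ht.1))
    have hp2 : (∫ t in x₀..x, f t / t) ≤ ∫ t in x₀..x, 2 * f x * (x ^ γ)⁻¹ * t ^ (γ - 1) := by
      apply intervalIntegral.integral_mono_on hx (integ_div hm hf0 hx₀ hx)
        hcont.intervalIntegrable
      intro t ht
      have ht0 : (0:ℝ) < t := lt_of_lt_of_le hx₀0 ht.1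
      have htγ : (0:ℝ) < t ^ γ := Real.rpow_pos_of_pos ht0 γ
      have key := hr t x ht.1 ht.2
      rw [Real.div_rpow hx0.le ht0.le] at key
      -- key : x^γ / t^γ * f t ≤ 2 * f x
      have key2 : f t * x ^ γ ≤ 2 * f x * t ^ γ := by
        rw [div_mul_eq_mul_div, div_le_iff₀ htγ] at key
        linarith [key]
      have e1 : f t / t = (f t * x ^ γ) / (t * x ^ γ) := by
        rw [mul_comm t (x ^ γ), ← div_div, mul_div_assoc, div_self (ne_of_gt hxγ), mul_one]
      have e2 : 2 * f x * (x ^ γ)⁻¹ * t ^ (γ - 1) = (2 * f x * t ^ γ) / (t * x ^ γ) := by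
        rw [Real.rpow_sub ht0, Real.rpow_one, div_eq_mul_inv, div_eq_mul_inv, mul_inv]
        ring
      rw [e1, e2]
      exact div_le_div_of_nonneg_right key2 (by positivity)
    have hval : (∫ t in x₀..x, 2 * f x * (x ^ γ)⁻¹ * t ^ (γ - 1)) ≤ 2 / γ * f x := by
      rw [intervalIntegral.integral_const_mul]
      have h0m : (0:ℝ) ∉ Set.uIcc x₀ x := by
        rw [Set.uIcc_of_le hx]; rintro ⟨h1, -⟩; linarith
      rw [integral_rpow (Or.inr ⟨by intro hh; exact hγ.ne' (by linarith), h0m⟩)]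
      have e3 : γ - 1 + 1 = γ := by ring
      rw [e3]
      have hb : x ^ γ - x₀ ^ γ ≤ x ^ γ := by
        have : (0:ℝ) < x₀ ^ γ := Real.rpow_pos_of_pos hx₀0 γ
        linarith
      calc 2 * f x * (x ^ γ)⁻¹ * ((x ^ γ - x₀ ^ γ) / γ)
          ≤ 2 * f x * (x ^ γ)⁻¹ * (x ^ γ / γ) := by
            apply mul_le_mul_of_nonneg_left _
              (mul_nonneg (mul_nonneg (by norm_num) (hf0 x)) (inv_nonneg.2 hxγ.le))
            exact div_le_div_of_nonneg_right hb hγ.le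
        _ = 2 / γ * f x := by field_simp
    calc intF f x = intF f x₀ + ∫ t in x₀..x, f t / t := hsplit
      _ ≤ Real.log x₀ * f x + 2 / γ * f x := by
          have := hp2.trans hval; linarith
      _ = (Real.log x₀ + 2 / γ) * f x := by ring
  · -- f =O intF f
    obtain ⟨K, hK1, hK⟩ := hd
    apply IsBigO.of_bound (K / Real.log 2)
    have hlog2 : (0:ℝ) < Real.log 2 := Real.log_pos one_lt_two
    filter_upwards [eventually_ge_atTop (2:ℝ), ev_mul (by norm_num : (0:ℝ) < 1/2) hK]
      with x hx2 hdo
    have e0 : (2:ℝ) * (1/2 * x) = x := by ring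
    rw [e0] at hdo
    have hx1 : (1:ℝ) ≤ 1/2 * x := by linarith
    have hxx : 1/2 * x ≤ x := by linarith
    have hlow : f (1/2 * x) * Real.log 2 ≤ intF f x := by
      have h1 := int_lower hm hf0 hx1 hxx
      have e1 : x / (1/2 * x) = 2 := by
        field_simp
      rw [e1] at h1
      calc f (1/2*x) * Real.log 2 ≤ ∫ t in (1/2*x)..x, f t / t := h1
        _ ≤ intF f x := by
            rw [intF_split hm hf0 hx1 hxx]
            linarith [intF_nonneg hf0 (1/2*x)]
    rw [Real.norm_of_nonneg (hf0 x), Real.norm_of_nonneg (intF_nonneg hf0 x)]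
    calc f x ≤ K * f (1/2 * x) := hdo
      _ ≤ K * (intF f x / Real.log 2) := by
          apply mul_le_mul_of_nonneg_left _ (by linarith)
          rw [le_div_iff₀ hlog2]
          exact hlow
      _ = K / Real.log 2 * intF f x := by ring

theorem theta_int_dg (hm : Monotone f) (hf0 : ∀ x, 0 ≤ f x)
    (h : (fun x => intF f x) =Θ[atTop] f) : DoubF f ∧ GrowF f := by
  obtain ⟨c₂, hc₂, hb₂⟩ := h.1.exists_pos
  obtain ⟨c₁, hc₁, hb₁⟩ := h.2.exists_pos
  have hev : ∀ᶠ x : ℝ in atTop, f x ≤ c₁ * intF f x ∧ intF f x ≤ c₂ * f x ∧ 1 ≤ x := by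
    filter_upwards [hb₁.bound, hb₂.bound, eventually_ge_atTop (1:ℝ)] with x h1 h2 h3
    rw [Real.norm_of_nonneg (hf0 x), Real.norm_of_nonneg (intF_nonneg hf0 x)] at h1 h2
    exact ⟨h1, h2, h3⟩
  obtain ⟨X, hX⟩ := eventually_atTop.1 hev
  set X' : ℝ := max X 1 with hX'
  have hX'1 : (1:ℝ) ≤ X' := le_max_right _ _
  have hpt : ∀ x, X' ≤ x → f x ≤ c₁ * intF f x ∧ intF f x ≤ c₂ * f x ∧ 1 ≤ x :=
    fun x hx => hX x (le_trans (le_max_left _ _) hx)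
  -- step lemma for an upper factor
  have upstep : ∀ θ : ℝ, 1 < θ → ∀ y, X' ≤ y →
      intF f (θ * y) ≤ intF f y + f (θ * y) * Real.log θ := by
    intro θ hθ y hy
    have hy1 : (1:ℝ) ≤ y := hX'1.trans hy
    have hy0 : (0:ℝ) < y := lt_of_lt_of_le one_pos hy1
    have hyθ : y ≤ θ * y := le_mul_of_one_le_left hy0.le hθ.le
    rw [intF_split hm hf0 hy1 hyθ]
    have := int_upper hm hf0 hy1 hyθ
    have e : θ * y / y = θ := by field_simp
    rw [e] at this
    linarith
  have downstep : ∀ θ : ℝ, 1 < θ → ∀ y, X' ≤ y →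
      intF f y + f y * Real.log θ ≤ intF f (θ * y) := by
    intro θ hθ y hy
    have hy1 : (1:ℝ) ≤ y := hX'1.trans hy
    have hy0 : (0:ℝ) < y := lt_of_lt_of_le one_pos hy1
    have hyθ : y ≤ θ * y := le_mul_of_one_le_left hy0.le hθ.le
    rw [intF_split hm hf0 hy1 hyθ]
    have := int_lower hm hf0 hy1 hyθ
    have e : θ * y / y = θ := by field_simp
    rw [e] at this
    linarith
  constructor
  · -- DoubF
    set θ : ℝ := Real.exp (1 / (2 * c₁)) with hθdef
    have hθ1 : 1 < θ := Real.one_lt_exp_iff.2 (by positivity)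
    have hθ0 : (0:ℝ) < θ := lt_trans one_pos hθ1
    have hlogθ : Real.log θ = 1 / (2 * c₁) := Real.log_exp _
    have claim : ∀ x, X' ≤ x → ∀ j : ℕ, intF f (θ ^ j * x) ≤ 2 ^ j * intF f x := by
      intro x hx j
      have hx1 : (1:ℝ) ≤ x := hX'1.trans hx
      have hx0 : (0:ℝ) < x := lt_of_lt_of_le one_pos hx1
      induction j with
      | zero => simp
      | succ j ih =>
        have hθj : (1:ℝ) ≤ θ ^ j := one_le_pow₀ hθ1.le
        have hyX : X' ≤ θ ^ j * x := hx.trans (le_mul_of_one_le_left hx0.le hθj)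
        have hstep := upstep θ hθ1 (θ ^ j * x) hyX
        have hθjx : X' ≤ θ * (θ ^ j * x) :=
          hyX.trans (le_mul_of_one_le_left (by positivity) hθ1.le)
        have hf1 := (hpt _ hθjx).1
        rw [hlogθ] at hstep
        have e : θ * (θ ^ j * x) = θ ^ (j+1) * x := by ring
        rw [e] at hstep hf1 hθjx
        -- intF f (θ^(j+1) x) ≤ intF f (θ^j x) + f(θ^(j+1) x)/(2c₁)
        -- f(θ^(j+1) x) ≤ c₁ intF f (θ^(j+1) x)
        have : intF f (θ ^ (j+1) * x) ≤ intF f (θ ^ j * x) + intF f (θ ^ (j+1) * x) / 2 := by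
          have hq : f (θ ^ (j+1) * x) * (1 / (2 * c₁)) ≤ intF f (θ ^ (j+1) * x) / 2 := by
            rw [mul_one_div, div_le_div_iff₀ (by positivity) (by norm_num)]
            calc f (θ ^ (j+1) * x) * 2 ≤ c₁ * intF f (θ ^ (j+1) * x) * 2 := by linarith
              _ = intF f (θ ^ (j+1) * x) * (2 * c₁) := by ring
          linarith
        have h2j : (0:ℝ) < 2 ^ j := by positivity
        calc intF f (θ ^ (j+1) * x) ≤ 2 * intF f (θ ^ j * x) := by linarith
          _ ≤ 2 * (2 ^ j * intF f x) := by linarith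
          _ = 2 ^ (j+1) * intF f x := by ring
    obtain ⟨k, hk⟩ := pow_unbounded_of_one_lt (2:ℝ) hθ1
    refine ⟨max 1 (c₁ * 2 ^ k * c₂), le_max_left _ _, ?_⟩
    filter_upwards [eventually_ge_atTop X'] with x hx
    have hx1 : (1:ℝ) ≤ x := hX'1.trans hx
    have hx0 : (0:ℝ) < x := lt_of_lt_of_le one_pos hx1
    have h2x : X' ≤ 2 * x := hx.trans (by linarith)
    calc f (2 * x) ≤ c₁ * intF f (2 * x) := (hpt _ h2x).1
      _ ≤ c₁ * intF f (θ ^ k * x) := by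
          apply mul_le_mul_of_nonneg_left _ hc₁.le
          apply intF_mono hm hf0 (by linarith)
          exact mul_le_mul_of_nonneg_right hk.le hx0.le
      _ ≤ c₁ * (2 ^ k * intF f x) := by
          have := claim x hx k
          apply mul_le_mul_of_nonneg_left this hc₁.le
      _ ≤ c₁ * (2 ^ k * (c₂ * f x)) := by
          have := (hpt x hx).2.1
          have h2k : (0:ℝ) < 2 ^ k := by positivity
          apply mul_le_mul_of_nonneg_left _ hc₁.le
          apply mul_le_mul_of_nonneg_left this h2k.le
      _ = c₁ * 2 ^ k * c₂ * f x := by ring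
      _ ≤ max 1 (c₁ * 2 ^ k * c₂) * f x :=
          mul_le_mul_of_nonneg_right (le_max_right _ _) (hf0 x)
  · -- GrowF
    set θ : ℝ := Real.exp c₂ with hθdef
    have hθ1 : 1 < θ := Real.one_lt_exp_iff.2 hc₂
    have hθ0 : (0:ℝ) < θ := lt_trans one_pos hθ1
    have hlogθ : Real.log θ = c₂ := Real.log_exp _
    have claim : ∀ x, X' ≤ x → ∀ j : ℕ, 2 ^ j * intF f x ≤ intF f (θ ^ j * x) := by
      intro x hx j
      have hx1 : (1:ℝ) ≤ x := hX'1.trans hx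
      have hx0 : (0:ℝ) < x := lt_of_lt_of_le one_pos hx1
      induction j with
      | zero => simp
      | succ j ih =>
        have hθj : (1:ℝ) ≤ θ ^ j := one_le_pow₀ hθ1.le
        have hyX : X' ≤ θ ^ j * x := hx.trans (le_mul_of_one_le_left hx0.le hθj)
        have hstep := downstep θ hθ1 (θ ^ j * x) hyX
        rw [hlogθ] at hstep
        have hf2 := (hpt _ hyX).2.1
        have hf2' : intF f (θ ^ j * x) ≤ f (θ ^ j * x) * c₂ := by linarith [hf2]
        have e : θ * (θ ^ j * x) = θ ^ (j+1) * x := by ring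
        rw [e] at hstep
        calc 2 ^ (j+1) * intF f x = 2 * (2 ^ j * intF f x) := by ring
          _ ≤ 2 * intF f (θ ^ j * x) := by linarith
          _ ≤ intF f (θ ^ j * x) + f (θ ^ j * x) * c₂ := by linarith
          _ ≤ intF f (θ ^ (j+1) * x) := hstep
    obtain ⟨j, hj⟩ := pow_unbounded_of_one_lt (2 * c₁ * c₂) (one_lt_two : (1:ℝ) < 2)
    refine ⟨θ ^ (j+1), one_lt_pow₀ hθ1 (Nat.succ_ne_zero j), ?_⟩
    filter_upwards [eventually_ge_atTop X'] with x hx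
    have hx1 : (1:ℝ) ≤ x := hX'1.trans hx
    have hx0 : (0:ℝ) < x := lt_of_lt_of_le one_pos hx1
    have hθj : (1:ℝ) ≤ θ ^ (j+1) := one_le_pow₀ hθ1.le
    have hLX : X' ≤ θ ^ (j+1) * x := hx.trans (le_mul_of_one_le_left hx0.le hθj)
    have key1 : intF f (θ ^ (j+1) * x) ≤ c₂ * f (θ ^ (j+1) * x) := (hpt _ hLX).2.1
    have key2 : f x ≤ c₁ * intF f x := (hpt x hx).1
    have key3 := claim x hx (j+1)
    have h2j : (2:ℝ) * c₁ * c₂ ≤ 2 ^ (j+1) := by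
      calc (2:ℝ) * c₁ * c₂ ≤ 2 ^ j := hj.le
        _ ≤ 2 ^ (j+1) := by
            apply pow_le_pow_right₀ one_le_two (Nat.le_succ j)
    -- 2 f x ≤ f (θ^(j+1) x)
    have hintf0 := intF_nonneg hf0 x
    nlinarith [mul_le_mul_of_nonneg_left key3 hc₂.le, hf0 x, hf0 (θ ^ (j+1) * x),
      mul_le_mul_of_nonneg_left key2 hc₂.le, mul_pos hc₁ hc₂]

section Bridges
variable {A : Set ℕ} (hA : A.Infinite)

lemma ORseq_iff_doubF (hA : A.Infinite) :
    ORseq A ↔ DoubF (fun x => (cntA A x : ℝ)) := by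
  constructor
  · intro h
    obtain ⟨c, hc, hb⟩ := h.exists_pos
    refine ⟨max c 1, le_max_right _ _, ?_⟩
    filter_upwards [hb.bound] with x hx
    rw [Real.norm_of_nonneg (Nat.cast_nonneg _), Real.norm_of_nonneg (Nat.cast_nonneg _)] at hx
    exact hx.trans (mul_le_mul_of_nonneg_right (le_max_left _ _) (Nat.cast_nonneg _))
  · intro ⟨K, hK1, hK⟩
    apply IsBigO.of_bound K
    filter_upwards [hK] with x hx
    rwa [Real.norm_of_nonneg (Nat.cast_nonneg _), Real.norm_of_nonneg (Nat.cast_nonneg _)]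

lemma seqA_mono (hA : A.Infinite) : Monotone (seqA A) := by
  intro m n hmn
  exact (Nat.nth_le_nth hA).2 hmn

lemma PIseq_to_growF (hA : A.Infinite) (h : PIseq A) :
    GrowF (fun x => (cntA A x : ℝ)) := by
  obtain ⟨C, hC, hb⟩ := h.exists_pos
  obtain ⟨n₀, hn₀⟩ := eventually_atTop.1 hb.bound
  have hC1 : ∀ n, n₀ ≤ n → (seqA A (2 * n) : ℝ) ≤ max C 1 * seqA A n := by
    intro n hn
    have := hn₀ n hn
    rw [Real.norm_of_nonneg (Nat.cast_nonneg _), Real.norm_of_nonneg (Nat.cast_nonneg _)] at this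
    exact this.trans (mul_le_mul_of_nonneg_right (le_max_left _ _) (Nat.cast_nonneg _))
  set C' : ℝ := max C 1 with hC'def
  have hC'1 : (1:ℝ) ≤ C' := le_max_right _ _
  refine ⟨C' * C' + 1, by nlinarith, ?_⟩
  filter_upwards [eventually_cntA_ge hA (max (n₀ + 2) 4), eventually_ge_atTop (0:ℝ)]
    with x hcnt hx0
  set m := cntA A x with hm
  have hm4 : 4 ≤ m := le_trans (le_max_right _ _) hcnt
  have hmn₀ : n₀ + 2 ≤ m := le_trans (le_max_left _ _) hcnt
  set n := m - 1 with hn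
  have hn1 : n₀ + 1 ≤ n := by omega
  have hnm : n < m := by omega
  -- a_n ≤ x
  have han : (seqA A n : ℝ) ≤ x := nth_le_of_lt_cntA hA hnm
  -- a_{2n+1} ≤ a_{4(n-1)} ≤ C' a_{2(n-1)} ≤ C'^2 a_{n-1} ≤ C'^2 a_n ≤ C'^2 x
  have hi1 : 2 * n + 1 ≤ 2 * (2 * (n - 1)) := by omega
  have hs1 : (seqA A (2 * n + 1) : ℝ) ≤ seqA A (2 * (2 * (n-1))) := by
    exact_mod_cast seqA_mono hA hi1
  have hs2 : (seqA A (2 * (2 * (n-1))) : ℝ) ≤ C' * seqA A (2 * (n-1)) :=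
    hC1 _ (by omega)
  have hs3 : (seqA A (2 * (n-1)) : ℝ) ≤ C' * seqA A (n-1) := hC1 _ (by omega)
  have hs4 : (seqA A (n-1) : ℝ) ≤ seqA A n := by
    exact_mod_cast seqA_mono hA (by omega)
  have hchain : (seqA A (2 * n + 1) : ℝ) ≤ C' * C' * x := by
    calc (seqA A (2 * n + 1) : ℝ) ≤ C' * seqA A (2 * (n-1)) := hs1.trans hs2
      _ ≤ C' * (C' * seqA A (n-1)) := by
          apply mul_le_mul_of_nonneg_left hs3 (by linarith)
      _ ≤ C' * (C' * seqA A n) := by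
          apply mul_le_mul_of_nonneg_left _ (by linarith)
          apply mul_le_mul_of_nonneg_left hs4 (by linarith)
      _ ≤ C' * (C' * x) := by
          apply mul_le_mul_of_nonneg_left _ (by linarith)
          apply mul_le_mul_of_nonneg_left han (by linarith)
      _ = C' * C' * x := by ring
  -- hence cntA ((C'^2+1) x) ≥ 2m
  have hcc : (seqA A (2 * n + 1) : ℝ) ≤ (C' * C' + 1) * x := by nlinarith
  have hfinal := lt_cntA_of_nth_le hA (y := (C' * C' + 1) * x) hcc
  -- 2n + 1 < cntA (...) → 2m ≤ cntA (...)
  have : 2 * m ≤ cntA A ((C' * C' + 1) * x) := by omega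
  calc 2 * (cntA A x : ℝ) = (2 * m : ℕ) := by rw [hm]; push_cast; ring
    _ ≤ (cntA A ((C' * C' + 1) * x) : ℝ) := by exact_mod_cast this

lemma growF_to_PIseq (hA : A.Infinite) (h : GrowF (fun x => (cntA A x : ℝ))) :
    PIseq A := by
  obtain ⟨L, hL1, hLev⟩ := h
  obtain ⟨x₁, hx₁⟩ := eventually_atTop.1 hLev
  apply IsBigO.of_bound L
  have htend : Tendsto (fun n : ℕ => (seqA A n : ℝ)) atTop atTop := by
    apply tendsto_natCast_atTop_atTop.comp
    apply tendsto_atTop_mono (fun n => Nat.le_nth (p := (· ∈ A)) ?_) tendsto_id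
    intro hf
    exact absurd hf hA
  filter_upwards [htend.eventually_ge_atTop x₁] with n hn
  have key : 2 * ((cntA A ((seqA A n : ℕ) : ℝ)) : ℝ) ≤
      (cntA A (L * ((seqA A n : ℕ) : ℝ)) : ℝ) := hx₁ _ hn
  -- 2 * cntA (a_n) ≤ cntA (L * a_n)
  have hcan : cntA A ((seqA A n : ℕ) : ℝ) = n + 1 := cntA_nth hA n
  rw [hcan] at key
  -- so cntA (L a_n) ≥ 2n+2 > 2n, hence a_{2n} ≤ L a_n
  have h2n : 2 * n < cntA A (L * (seqA A n : ℝ)) := by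
    have : ((2 * n : ℕ) : ℝ) < 2 * ((n : ℝ) + 1) := by push_cast; linarith
    by_contra hcon
    push_neg at hcon
    have : (cntA A (L * (seqA A n : ℝ)) : ℝ) ≤ ((2 * n : ℕ) : ℝ) := by exact_mod_cast hcon
    push_cast at this key ⊢
    linarith
  have := nth_le_of_lt_cntA hA h2n
  rw [Real.norm_of_nonneg (Nat.cast_nonneg _), Real.norm_of_nonneg (Nat.cast_nonneg _)]
  exact this.trans_eq rfl

section SAsec
variable {A : Set ℕ} {h : ℕ}

lemma ncard_pi_const (S : Set ℕ) (h : ℕ) :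
    {f : Fin h → ℕ | ∀ i, f i ∈ S}.ncard = S.ncard ^ h := by
  rw [← Nat.card_coe_set_eq, ← Nat.card_coe_set_eq]
  calc Nat.card {f : Fin h → ℕ | ∀ i, f i ∈ S}
      = Nat.card (∀ _ : Fin h, {n : ℕ // n ∈ S}) := Nat.card_congr Equiv.subtypePiEquivPi
    _ = Nat.card {n : ℕ // n ∈ S} ^ h := by
        rw [Nat.card_fun]
        simp

lemma sA_subset_pi (A : Set ℕ) (h : ℕ) (x : ℝ) :
    {t : Fin h → ℕ | (∀ i, t i ∈ A) ∧ ((∑ i, t i : ℕ) : ℝ) ≤ x} ⊆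
      {t : Fin h → ℕ | ∀ i, t i ∈ {n : ℕ | n ∈ A ∧ (n : ℝ) ≤ x}} := by
  rintro t ⟨h1, h2⟩ 
  intro i
  refine ⟨h1 i, ?_⟩
  have : t i ≤ ∑ j, t j := Finset.single_le_sum (fun j _ => Nat.zero_le _) (Finset.mem_univ i)
  calc ((t i : ℕ) : ℝ) ≤ ((∑ j, t j : ℕ) : ℝ) := by exact_mod_cast this
    _ ≤ x := h2

lemma sA_set_finite (A : Set ℕ) (h : ℕ) (x : ℝ) :
    {t : Fin h → ℕ | (∀ i, t i ∈ A) ∧ ((∑ i, t i : ℕ) : ℝ) ≤ x}.Finite :=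
  Set.Finite.subset (Set.Finite.pi' (fun _ => cntA_set_finite A x)) (sA_subset_pi A h x)

lemma sA_mono (A : Set ℕ) (h : ℕ) : Monotone (fun x => (sA A h x : ℝ)) := by
  intro x y hxy
  apply Nat.cast_le.2
  exact Set.ncard_le_ncard (fun t ⟨h1, h2⟩ => ⟨h1, h2.trans hxy⟩) (sA_set_finite A h y)

lemma sA_le (A : Set ℕ) (h : ℕ) (x : ℝ) : sA A h x ≤ cntA A x ^ h := by
  rw [sA, cntA, ← ncard_pi_const]
  exact Set.ncard_le_ncard (sA_subset_pi A h x) (Set.Finite.pi' (fun _ => cntA_set_finite A x))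

lemma le_sA (A : Set ℕ) (hh : 1 ≤ h) {x : ℝ} (hx : 0 ≤ x) :
    cntA A (x / h) ^ h ≤ sA A h x := by
  rw [sA, cntA, ← ncard_pi_const]
  apply Set.ncard_le_ncard _ (sA_set_finite A h x)
  intro t ht
  refine ⟨fun i => (ht i).1, ?_⟩
  have hcast : ((∑ i, t i : ℕ) : ℝ) = ∑ i, ((t i : ℕ) : ℝ) := by push_cast; rfl
  rw [hcast]
  calc ∑ i, ((t i : ℕ) : ℝ) ≤ ∑ _i : Fin h, (x / h) := Finset.sum_le_sum (fun i _ => (ht i).2)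
    _ = h * (x / h) := by rw [Finset.sum_const, Finset.card_univ, Fintype.card_fin, nsmul_eq_mul]
    _ = x := by
        have : (h:ℝ) ≠ 0 := by positivity
        field_simp

lemma sA_le' (A : Set ℕ) (h : ℕ) (x : ℝ) :
    ((sA A h x : ℕ) : ℝ) ≤ ((cntA A x : ℕ) : ℝ) ^ h := by
  exact_mod_cast sA_le A h x

lemma le_sA' (A : Set ℕ) (hh : 1 ≤ h) {x : ℝ} (hx : 0 ≤ x) :
    ((cntA A (x / h) : ℕ) : ℝ) ^ h ≤ ((sA A h x : ℕ) : ℝ) := by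
  exact_mod_cast le_sA A hh hx

end SAsec

section Transfer
variable {A : Set ℕ} {h : ℕ}

lemma doubF_transfer (hh : 1 ≤ h) (hd : DoubF (fun x => (cntA A x : ℝ))) :
    DoubF (fun x => (sA A h x : ℝ)) := by
  have hh0 : (0:ℝ) < h := by exact_mod_cast hh
  obtain ⟨K, hK1, hK⟩ := doubF_mul (cntA_mono A) (cntA_nonneg A) hd (2 * h)
  refine ⟨K ^ h, one_le_pow₀ hK1, ?_⟩
  filter_upwards [ev_mul (by positivity : (0:ℝ) < 1 / h) hK, eventually_ge_atTop (0:ℝ)]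
    with x hKx hx0
  have e : 2 * (h:ℝ) * (1 / h * x) = 2 * x := by field_simp
  have e2 : (1:ℝ) / h * x = x / h := by field_simp
  rw [e, e2] at hKx
  -- hKx : cntA (2x) ≤ K * cntA (x/h)
  calc ((sA A h (2*x) : ℕ) : ℝ) ≤ ((cntA A (2*x) : ℕ) : ℝ) ^ h := sA_le' A h (2*x)
    _ ≤ (K * ((cntA A (x/h) : ℕ) : ℝ)) ^ h :=
        pow_le_pow_left₀ (Nat.cast_nonneg _) hKx h
    _ = K ^ h * ((cntA A (x/h) : ℕ) : ℝ) ^ h := mul_pow _ _ _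
    _ ≤ K ^ h * ((sA A h x : ℕ) : ℝ) := by
        apply mul_le_mul_of_nonneg_left (le_sA' A hh hx0) (by positivity)

lemma growF_transfer (hh : 1 ≤ h) (hg : GrowF (fun x => (cntA A x : ℝ))) :
    GrowF (fun x => (sA A h x : ℝ)) := by
  have hh0 : (0:ℝ) < h := by exact_mod_cast hh
  have hh1 : (1:ℝ) ≤ h := by exact_mod_cast hh
  obtain ⟨L, hL1, hL⟩ := hg
  refine ⟨h * L, by nlinarith, ?_⟩
  filter_upwards [hL, eventually_ge_atTop (0:ℝ)] with x hLx hx0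
  have hLx0 : 0 ≤ L * x := by nlinarith
  have e : (h:ℝ) * L * x / h = L * x := by field_simp
  calc 2 * ((sA A h x : ℕ) : ℝ) ≤ 2 * ((cntA A x : ℕ) : ℝ) ^ h := by
        apply mul_le_mul_of_nonneg_left (sA_le' A h x) (by norm_num)
    _ ≤ 2 ^ h * ((cntA A x : ℕ) : ℝ) ^ h := by
        apply mul_le_mul_of_nonneg_right _ (by positivity)
        calc (2:ℝ) = 2 ^ 1 := (pow_one 2).symm
          _ ≤ 2 ^ h := pow_le_pow_right₀ one_le_two hh
    _ = (2 * ((cntA A x : ℕ) : ℝ)) ^ h := (mul_pow _ _ _).symm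
    _ ≤ ((cntA A (L * x) : ℕ) : ℝ) ^ h := pow_le_pow_left₀ (by positivity) hLx h
    _ = ((cntA A ((h * L * x) / h) : ℕ) : ℝ) ^ h := by rw [e]
    _ ≤ ((sA A h (h * L * x) : ℕ) : ℝ) := le_sA' A hh (by nlinarith)
    _ = ((sA A h ((h * L) * x) : ℕ) : ℝ) := by ring_nf

lemma doubF_transfer' (hh : 1 ≤ h) (hd : DoubF (fun x => (sA A h x : ℝ))) :
    DoubF (fun x => (cntA A x : ℝ)) := by
  have hh0 : (0:ℝ) < h := by exact_mod_cast hh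
  obtain ⟨K, hK1, hK⟩ := doubF_mul (sA_mono A h) (fun _ => Nat.cast_nonneg _) hd (2 * h)
  refine ⟨K, hK1, ?_⟩
  filter_upwards [hK, eventually_ge_atTop (0:ℝ)] with x hKx hx0
  -- hKx : sA (2h·x) ≤ K sA x
  have e : 2 * (h:ℝ) * x / h = 2 * x := by field_simp
  have key : ((cntA A (2*x) : ℕ) : ℝ) ^ h ≤ (K * ((cntA A x : ℕ) : ℝ)) ^ h := by
    calc ((cntA A (2*x) : ℕ) : ℝ) ^ h = ((cntA A (2 * h * x / h) : ℕ) : ℝ) ^ h := by rw [e]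
      _ ≤ ((sA A h (2 * h * x) : ℕ) : ℝ) := le_sA' A hh (by nlinarith)
      _ ≤ K * ((sA A h x : ℕ) : ℝ) := hKx
      _ ≤ K * (((cntA A x : ℕ) : ℝ) ^ h) := by
          apply mul_le_mul_of_nonneg_left (sA_le' A h x) (by linarith)
      _ ≤ K ^ h * (((cntA A x : ℕ) : ℝ) ^ h) := by
          apply mul_le_mul_of_nonneg_right _ (by positivity)
          calc K = K ^ 1 := (pow_one K).symm
            _ ≤ K ^ h := pow_le_pow_right₀ hK1 hh
      _ = (K * ((cntA A x : ℕ) : ℝ)) ^ h := (mul_pow _ _ _).symm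
  exact (pow_le_pow_iff_left₀ (Nat.cast_nonneg _) (by positivity) (by omega)).1 key

lemma growF_transfer' (hh : 1 ≤ h) (hg : GrowF (fun x => (sA A h x : ℝ))) :
    GrowF (fun x => (cntA A x : ℝ)) := by
  have hh0 : (0:ℝ) < h := by exact_mod_cast hh
  have hh1 : (1:ℝ) ≤ h := by exact_mod_cast hh
  obtain ⟨L', hL'1, x₀, hx₀1, hpt⟩ :=
    growF_pointwise (f := fun x => (sA A h x : ℝ)) hg
  have hL'h : (1:ℝ) < L' ^ h := one_lt_pow₀ hL'1 (by omega)
  refine ⟨h * L' ^ h, by nlinarith, ?_⟩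
  filter_upwards [eventually_ge_atTop (max x₀ 1), eventually_ge_atTop (0:ℝ)] with x hx hx0
  have hhx : x₀ ≤ h * x := by
    calc x₀ ≤ max x₀ 1 := le_max_left _ _
      _ ≤ x := hx
      _ ≤ h * x := le_mul_of_one_le_left hx0 hh1
  have hgrow : 2 ^ h * ((sA A h ((h:ℝ) * x) : ℕ) : ℝ) ≤
      ((sA A h (L' ^ h * ((h:ℝ) * x)) : ℕ) : ℝ) := hpt ((h:ℝ) * x) hhx h
  -- 2^h * sA(h x) ≤ sA (L'^h * (h x))
  have e1 : (h:ℝ) * x / h = x := by field_simp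
  have key : (2 * ((cntA A x : ℕ) : ℝ)) ^ h ≤ (((cntA A (h * L' ^ h * x) : ℕ) : ℝ)) ^ h := by
    calc (2 * ((cntA A x : ℕ) : ℝ)) ^ h = 2 ^ h * ((cntA A x : ℕ) : ℝ) ^ h := mul_pow _ _ _
      _ = 2 ^ h * ((cntA A (h * x / h) : ℕ) : ℝ) ^ h := by rw [e1]
      _ ≤ 2 ^ h * ((sA A h (h * x) : ℕ) : ℝ) := by
          apply mul_le_mul_of_nonneg_left (le_sA' A hh (by positivity)) (by positivity)
      _ ≤ ((sA A h (L' ^ h * (h * x)) : ℕ) : ℝ) := hgrow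
      _ ≤ ((cntA A (L' ^ h * (h * x)) : ℕ) : ℝ) ^ h := sA_le' A h _
      _ = ((cntA A (h * L' ^ h * x) : ℕ) : ℝ) ^ h := by ring_nf
  exact (pow_le_pow_iff_left₀ (by positivity) (Nat.cast_nonneg _) (by omega)).1 key

end Transfer


theorem stmt_14 (A : Set ℕ) (hA : A.Infinite) :
    List.TFAE [
      -- (i) A is O-regularly varying and has positive increase
      (∀ lam : ℝ, 0 < lam →
        (fun x : ℝ => (cntA A (lam * x) : ℝ)) =Θ[atTop] (fun x : ℝ => (cntA A x : ℝ))) ∧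
        PositiveIncrease (fun x : ℝ => (cntA A x : ℝ)),
      -- (ii) ∫₁ˣ A(t)/t dt = Θ(A(x))
      (fun x : ℝ => ∫ t in Set.Icc 1 x, (cntA A t : ℝ) / t) =Θ[atTop]
        (fun x : ℝ => (cntA A x : ℝ)),
      -- (iii) A(2x) = O(A(x)) and a_{2n} = O(a_n)
      ORseq A ∧ PIseq A,
      -- (iv) ∫₁ˣ s_{A,h}(t)/t dt = Θ(s_{A,h}(x)) for some h ≥ 1
      ∃ h : ℕ, 1 ≤ h ∧
        (fun x : ℝ => ∫ t in Set.Icc 1 x, (sA A h t : ℝ) / t) =Θ[atTop]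
          (fun x : ℝ => (sA A h x : ℝ)),
      -- (iv') the same for every h ≥ 1
      ∀ h : ℕ, 1 ≤ h →
        (fun x : ℝ => ∫ t in Set.Icc 1 x, (sA A h t : ℝ) / t) =Θ[atTop]
          (fun x : ℝ => (sA A h x : ℝ))
    ] := by
  have hm := cntA_mono A
  have hf0 := cntA_nonneg A
  tfae_have 3 → 1 := by
    rintro ⟨hor, hpi⟩
    have hd := (ORseq_iff_doubF hA).1 hor
    have hg := PIseq_to_growF hA hpi
    exact ⟨fun lam hlam => doubF_theta hm hf0 hd hlam, growF_posInc hm hf0 hg⟩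
  tfae_have 1 → 3 := by
    rintro ⟨hth, hpi⟩
    refine ⟨(ORseq_iff_doubF hA).2 (theta_doubF hf0 (hth 2 two_pos)), ?_⟩
    exact growF_to_PIseq hA (posInc_growF hf0 hpi)
  tfae_have 3 → 2 := by
    rintro ⟨hor, hpi⟩
    exact dg_theta_int hm hf0 ((ORseq_iff_doubF hA).1 hor) (PIseq_to_growF hA hpi)
  tfae_have 2 → 3 := by
    intro h2
    obtain ⟨hd, hg⟩ := theta_int_dg hm hf0 h2
    exact ⟨(ORseq_iff_doubF hA).2 hd, growF_to_PIseq hA hg⟩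
  tfae_have 3 → 5 := by
    rintro ⟨hor, hpi⟩ h hh
    have hd := doubF_transfer hh ((ORseq_iff_doubF hA).1 hor)
    have hg := growF_transfer hh (PIseq_to_growF hA hpi)
    exact dg_theta_int (sA_mono A h) (fun _ => Nat.cast_nonneg _) hd hg
  tfae_have 5 → 4 := fun h5 => ⟨1, le_refl 1, h5 1 (le_refl 1)⟩
  tfae_have 4 → 3 := by
    rintro ⟨h, hh, hth⟩
    obtain ⟨hd, hg⟩ := theta_int_dg (sA_mono A h) (fun _ => Nat.cast_nonneg _) hth
    exact ⟨(ORseq_iff_doubF hA).2 (doubF_transfer' hh hd),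
      growF_to_PIseq hA (growF_transfer' hh hg)⟩
  tfae_finish
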